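/- Let S ⊆ M ≅ ℤⁿ be a strictly positive semigroup with respect to a height function h : M → ℤ, and assume its limit figure Δ_S is a polytope. Then S is finitely generated if and only if every vertex of Δ_S lifts to S. -/

import Mathlib

/- STATEMENT 6: Let `S ⊆ M ≅ ℤⁿ` be a strictly positive semigroup w.r.t. a
surjective height `h : M → ℤ`, whose limit figure `Δ_S = cl(cone S) ∩ h_ℝ⁻¹(1)`
is a polytope.  Then `S` is finitely generated if and only if every vertex
(extreme point) of `Δ_S` lifts to `S`, i.e. some positive real multiple of it
lies in `S`. -/

open Set Filter Topology

/-- Dickson's lemma: finite basis for subsets of `κ → ℕ`. -/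
lemma dickson_basis {κ : Type*} [Fintype κ] (A : Set (κ → ℕ)) :
    ∃ B : Finset (κ → ℕ), ↑B ⊆ A ∧ ∀ a ∈ A, ∃ b ∈ B, b ≤ a := by
  classical
  set Min : Set (κ → ℕ) := {a | a ∈ A ∧ ∀ a' ∈ A, a' ≤ a → a' = a} with hMin
  have hanti : IsAntichain (· ≤ ·) Min := by
    rintro a ⟨haA, _⟩ b ⟨hbA, hb⟩ hne hle
    exact hne (hb a haA hle)
  have hpwo : Min.IsPWO :=
    have hwo : ∀ _ : κ, IsWellOrder ℕ (· < ·) := fun _ => inferInstance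
    Set.isPWO_of_wellQuasiOrderedLE Min
  have hfin : Min.Finite := hanti.finite_of_partiallyWellOrderedOn hpwo
  have key : ∀ N (a : κ → ℕ), (∑ i, a i) ≤ N → a ∈ A → ∃ m ∈ Min, m ≤ a := by
    intro N
    induction N with
    | zero =>
      intro a hsum haA
      refine ⟨a, ⟨haA, fun a' ha'A hle => ?_⟩, le_refl a⟩
      funext i
      have h1 : a i ≤ ∑ j, a j :=
        Finset.single_le_sum (fun j _ => Nat.zero_le (a j)) (Finset.mem_univ i)
      have h2 : a' i ≤ a i := hle i
      omega
    | succ N ih =>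
      intro a hsum haA
      by_cases hmin : ∀ a' ∈ A, a' ≤ a → a' = a
      · exact ⟨a, ⟨haA, hmin⟩, le_refl a⟩
      · push_neg at hmin
        obtain ⟨a', ha'A, hle, hne⟩ := hmin
        have hlt : ∑ i, a' i < ∑ i, a i := by
          obtain ⟨j, hj⟩ : ∃ j, a' j < a j := by
            by_contra hc
            push_neg at hc
            exact hne (le_antisymm hle fun i => hc i)
          exact Finset.sum_lt_sum (fun i _ => hle i) ⟨j, Finset.mem_univ j, hj⟩
        obtain ⟨m, hm, hma⟩ := ih a' (by omega) ha'A
        exact ⟨m, hm, hma.trans hle⟩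
  refine ⟨hfin.toFinset, ?_, fun a ha => ?_⟩
  · intro b hb
    rw [Set.Finite.coe_toFinset] at hb
    exact hb.1
  · obtain ⟨m, hm, hma⟩ := key (∑ i, a i) a le_rfl ha
    exact ⟨m, hfin.mem_toFinset.2 hm, hma⟩

/-- The cone over a convex set is convex. -/
lemma coneOf_convex {E : Type*} [AddCommGroup E] [Module ℝ E] {Q : Set E} (hQ : Convex ℝ Q) :
    Convex ℝ {y | ∃ t : ℝ, 0 ≤ t ∧ ∃ z ∈ Q, y = t • z} := by
  rintro y₁ ⟨t₁, ht₁, z₁, hz₁, rfl⟩ y₂ ⟨t₂, ht₂, z₂, hz₂, rfl⟩ a b ha hb hab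
  by_cases hT : a * t₁ + b * t₂ = 0
  · have h1 : a * t₁ = 0 := by nlinarith
    have h2 : b * t₂ = 0 := by nlinarith
    refine ⟨0, le_refl 0, z₁, hz₁, ?_⟩
    rw [smul_smul, smul_smul, h1, h2]
    simp
  · have hT' : 0 < a * t₁ + b * t₂ :=
      lt_of_le_of_ne (by positivity) (Ne.symm hT)
    refine ⟨a * t₁ + b * t₂, le_of_lt hT',
      ((a * t₁) / (a * t₁ + b * t₂)) • z₁ + ((b * t₂) / (a * t₁ + b * t₂)) • z₂,
      hQ hz₁ hz₂ (by positivity) (by positivity) (by field_simp), ?_⟩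
    rw [smul_add, smul_smul, smul_smul, smul_smul, smul_smul]
    congr 2 <;> field_simp

/-- The cone over a set is closed under nonnegative scaling. -/
lemma coneOf_smul {E : Type*} [AddCommGroup E] [Module ℝ E] {Q : Set E} {c : ℝ} (hc : 0 ≤ c)
    {y : E} (hy : y ∈ {y | ∃ t : ℝ, 0 ≤ t ∧ ∃ z ∈ Q, y = t • z}) :
    c • y ∈ {y | ∃ t : ℝ, 0 ≤ t ∧ ∃ z ∈ Q, y = t • z} := by
  obtain ⟨t, ht, z, hz, rfl⟩ := hy
  exact ⟨c * t, mul_nonneg hc ht, z, hz, smul_smul c t z⟩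

/-- The cone over a convex set is closed under addition. -/
lemma coneOf_add {E : Type*} [AddCommGroup E] [Module ℝ E] {Q : Set E} (hQ : Convex ℝ Q)
    {y₁ y₂ : E} (h₁ : y₁ ∈ {y | ∃ t : ℝ, 0 ≤ t ∧ ∃ z ∈ Q, y = t • z})
    (h₂ : y₂ ∈ {y | ∃ t : ℝ, 0 ≤ t ∧ ∃ z ∈ Q, y = t • z}) :
    y₁ + y₂ ∈ {y | ∃ t : ℝ, 0 ≤ t ∧ ∃ z ∈ Q, y = t • z} := by
  have hmid := coneOf_convex hQ h₁ h₂ (by norm_num : (0:ℝ) ≤ 1/2) (by norm_num : (0:ℝ) ≤ 1/2)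
    (by norm_num)
  have := coneOf_smul (by norm_num : (0:ℝ) ≤ 2) hmid
  have h2 : (2:ℝ) • ((1/2 : ℝ) • y₁ + (1/2 : ℝ) • y₂) = y₁ + y₂ := by
    rw [smul_add, smul_smul, smul_smul]
    norm_num
  rwa [h2] at this

/-- Limit lemma: a point of the closure of the cone over a closed subset `Q` of the affine
hyperplane `f = 1` which itself lies on the hyperplane belongs to `Q`. -/
lemma mem_of_closure_cone {E : Type*} [NormedAddCommGroup E] [NormedSpace ℝ E]
    (f : E →L[ℝ] ℝ) {Q : Set E} (hQc : IsClosed Q) (hQ1 : ∀ z ∈ Q, f z = 1) {p : E}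
    (hp : p ∈ closure {y | ∃ t : ℝ, 0 ≤ t ∧ ∃ z ∈ Q, y = t • z}) (hfp : f p = 1) : p ∈ Q := by
  obtain ⟨u, hu, hlim⟩ := mem_closure_iff_seq_limit.1 hp
  have hf : Tendsto (fun k => f (u k)) atTop (𝓝 1) := by
    have := (f.continuous.tendsto p).comp hlim
    simpa [hfp, Function.comp_def] using this
  have hinv : Tendsto (fun k => (f (u k))⁻¹) atTop (𝓝 1) := by
    simpa using hf.inv₀ one_ne_zero
  have hz : Tendsto (fun k => (f (u k))⁻¹ • u k) atTop (𝓝 p) := by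
    simpa using hinv.smul hlim
  have hpos : ∀ᶠ k in atTop, (0:ℝ) < f (u k) := hf.eventually_const_lt one_pos
  have hev : ∀ᶠ k in atTop, (f (u k))⁻¹ • u k ∈ Q := by
    filter_upwards [hpos] with k hk
    obtain ⟨t, ht, z, hz', heq⟩ := hu k
    have hfz : f (u k) = t := by rw [heq, map_smul, hQ1 z hz', smul_eq_mul, mul_one]
    have htpos : t ≠ 0 := by
      intro h0
      rw [hfz] at hk
      exact lt_irrefl 0 (h0 ▸ hk)
    rw [hfz, heq, inv_smul_smul₀ htpos]
    exact hz'
  exact hQc.mem_of_tendsto hz hev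

open Set Filter Topology

/-- A submonoid of `ℤⁿ` covered by finitely many translates of a finitely
generated submonoid of itself is finitely generated. -/
lemma fg_of_cover {n : ℕ} {κ : Type*} [Fintype κ] (S : AddSubmonoid (Fin n → ℤ))
    (w : κ → (Fin n → ℤ)) (hw : ∀ j, w j ∈ S) (F : Finset (Fin n → ℤ))
    (hcover : ∀ s ∈ S, ∃ f ∈ F, ∃ a : κ → ℕ, s = f + ∑ j, a j • w j) : S.FG := by
  classical
  choose B hBsub hBle using fun f : Fin n → ℤ =>
    dickson_basis {a : κ → ℕ | f + ∑ j, a j • w j ∈ S}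
  refine ⟨(F.biUnion fun f => (B f).image fun b => f + ∑ j, b j • w j) ∪
      Finset.univ.image w, le_antisymm ?_ ?_⟩
  · rw [AddSubmonoid.closure_le]
    intro x hx
    rw [Finset.coe_union, Set.mem_union] at hx
    rcases hx with hx | hx
    · rw [Finset.mem_coe, Finset.mem_biUnion] at hx
      obtain ⟨f, hfF, hmem⟩ := hx
      obtain ⟨b, hbB, rfl⟩ := Finset.mem_image.1 hmem
      exact hBsub f (Finset.mem_coe.2 hbB)
    · rw [Finset.mem_coe, Finset.mem_image] at hx
      obtain ⟨j, _, rfl⟩ := hx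
      exact hw j
  · intro s hs
    obtain ⟨f, hfF, a, hseq⟩ := hcover s hs
    subst hseq
    have haA : a ∈ {a : κ → ℕ | f + ∑ j, a j • w j ∈ S} := hs
    obtain ⟨b, hbB, hba⟩ := hBle f a haA
    have hdecomp : f + ∑ j, a j • w j = (f + ∑ j, b j • w j) + ∑ j, (a j - b j) • w j := by
      rw [add_assoc, ← Finset.sum_add_distrib]
      congr 1
      refine Finset.sum_congr rfl fun j _ => ?_
      rw [← add_smul, Nat.add_sub_cancel' (hba j)]
    rw [hdecomp]
    refine AddSubmonoid.add_mem _ (AddSubmonoid.subset_closure ?_)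
      (AddSubmonoid.sum_mem _ fun j _ => nsmul_mem (AddSubmonoid.subset_closure ?_) _)
    · rw [Finset.coe_union, Set.mem_union]
      left
      rw [Finset.mem_coe, Finset.mem_biUnion]
      exact ⟨f, hfF, Finset.mem_image.2 ⟨b, hbB, rfl⟩⟩
    · rw [Finset.coe_union, Set.mem_union]
      right
      rw [Finset.mem_coe, Finset.mem_image]
      exact ⟨j, Finset.mem_univ j, rfl⟩

/-- The linear functional `y ↦ ∑ i, y i * c i` as a continuous linear map. -/
noncomputable def hypMap {n : ℕ} (c : Fin n → ℝ) : (Fin n → ℝ) →L[ℝ] ℝ :=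
  LinearMap.toContinuousLinearMap
    { toFun := fun y => ∑ i, y i * c i
      map_add' := fun x y => by
        simp [add_mul, Finset.sum_add_distrib]
      map_smul' := fun a x => by
        simp [Finset.mul_sum, smul_eq_mul, mul_assoc] }

lemma hypMap_apply {n : ℕ} (c : Fin n → ℝ) (y : Fin n → ℝ) :
    hypMap c y = ∑ i, y i * c i := rfl

theorem stmt6 (n : ℕ) (h : (Fin n → ℤ) →ₗ[ℤ] ℤ) (hsurj : Function.Surjective h)
    (S : AddSubmonoid (Fin n → ℤ))
    (hpos : ∀ s ∈ S, 0 ≤ h s) (hstrict : ∀ s ∈ S, h s = 0 → s = 0)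
    (Δ : Set (Fin n → ℝ))
    (hΔ : Δ = (closure {y : Fin n → ℝ | ∃ c : ℝ, 0 ≤ c ∧ ∃ x ∈ convexHull ℝ
            ((fun (m : Fin n → ℤ) (i : Fin n) => (m i : ℝ)) '' (S : Set (Fin n → ℤ))),
          y = c • x})
        ∩ {y : Fin n → ℝ | ∑ i, y i * (h (Pi.single i 1) : ℝ) = 1})
    (hpoly : ∃ W : Finset (Fin n → ℝ), Δ = convexHull ℝ (W : Set (Fin n → ℝ))) :
    S.FG ↔ ∀ p ∈ Set.extremePoints ℝ Δ,
      ∃ c : ℝ, 0 < c ∧ ∃ s ∈ S, (fun i => c * p i) = fun i => ((s i : ℤ) : ℝ) := by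
  classical
  set ι : (Fin n → ℤ) → (Fin n → ℝ) := fun m i => (m i : ℝ) with hι
  set f : (Fin n → ℝ) →L[ℝ] ℝ := hypMap (fun i => (h (Pi.single i 1) : ℝ)) with hfdef
  have hfapply : ∀ y : Fin n → ℝ, f y = ∑ i, y i * (h (Pi.single i 1) : ℝ) := fun y => rfl
  have hsingle : ∀ i : Fin n, (fun j => if i = j then (1:ℤ) else 0) = Pi.single i 1 := by
    intro i
    funext j
    rw [Pi.single_apply]
    simp [eq_comm]
  have hcast : ∀ m : Fin n → ℤ, f (ι m) = (h m : ℝ) := by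
    intro m
    rw [hfapply]
    have hm : h m = ∑ i, m i * h (Pi.single i 1) := by
      have h0 := LinearMap.pi_apply_eq_sum_univ h m
      simp only [hsingle, smul_eq_mul] at h0
      exact h0
    rw [hm]
    push_cast
    rfl
  have hιzero : ι 0 = 0 := by funext i; simp [hι]
  have hhpos : ∀ s ∈ S, s ≠ 0 → 0 < h s := by
    intro s hsS hs0
    exact lt_of_le_of_ne (hpos s hsS) fun e => hs0 (hstrict s hsS e.symm)
  have hconemem : ∀ s ∈ S, s ≠ 0 → ((h s : ℝ))⁻¹ • ι s ∈ Δ := by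
    intro s hsS hs0
    have hhs : 0 < h s := hhpos s hsS hs0
    have hhsR : (0:ℝ) < (h s : ℝ) := by exact_mod_cast hhs
    rw [hΔ]
    constructor
    · apply subset_closure
      exact ⟨(h s : ℝ)⁻¹, by positivity, ι s,
        subset_convexHull ℝ _ ⟨s, hsS, rfl⟩, rfl⟩
    · show ∑ i, (((h s : ℝ))⁻¹ • ι s) i * (h (Pi.single i 1) : ℝ) = 1
      rw [← hfapply, map_smul, hcast, smul_eq_mul, inv_mul_cancel₀ (ne_of_gt hhsR)]
  constructor
  · -- finitely generated → extreme points lift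
    rintro ⟨G, hG⟩ p hp
    by_cases hS0 : ∀ s ∈ S, s = 0
    · exfalso
      have himg : ι '' (S : Set (Fin n → ℤ)) = {0} := by
        apply Set.eq_singleton_iff_unique_mem.2
        refine ⟨⟨0, S.zero_mem, hιzero⟩, ?_⟩
        rintro y ⟨s, hsS, rfl⟩
        rw [hS0 s hsS]
        exact hιzero
      have hcone0 : {y : Fin n → ℝ | ∃ c : ℝ, 0 ≤ c ∧ ∃ x ∈ convexHull ℝ
          (ι '' (S : Set (Fin n → ℤ))), y = c • x} = {0} := by
        rw [himg, convexHull_singleton]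
        ext z
        constructor
        · rintro ⟨c, _, x, hx, rfl⟩
          rw [Set.mem_singleton_iff] at hx
          simp [hx]
        · rintro hz
          rw [Set.mem_singleton_iff] at hz
          exact ⟨0, le_rfl, 0, rfl, by simp [hz]⟩
      have hΔempty : Δ = ∅ := by
        rw [hΔ, hcone0, closure_singleton]
        apply Set.eq_empty_iff_forall_notMem.2
        rintro y ⟨hy1, hy2⟩
        rw [Set.mem_singleton_iff] at hy1
        subst hy1
        simp only [Set.mem_setOf_eq, Pi.zero_apply, zero_mul, Finset.sum_const_zero] at hy2
        exact zero_ne_one hy2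
      rw [hΔempty] at hp
      exact absurd (extremePoints_subset hp) (Set.notMem_empty p)
    · push_neg at hS0
      obtain ⟨s₀, hs₀S, hs₀ne⟩ := hS0
      have hgS : ∀ g ∈ G, g ∈ S := fun g hg => hG ▸ AddSubmonoid.subset_closure hg
      have hex : ∃ g₀, g₀ ∈ G ∧ g₀ ≠ (0 : Fin n → ℤ) := by
        by_contra hc
        push_neg at hc
        have hG0 : (G : Set (Fin n → ℤ)) ⊆ ((⊥ : AddSubmonoid (Fin n → ℤ)) : Set _) := by
          intro g hg
          simp only [AddSubmonoid.coe_bot, Set.mem_singleton_iff]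
          exact hc g hg
        have hle := AddSubmonoid.closure_le.2 hG0
        rw [hG] at hle
        have := hle hs₀S
        rw [AddSubmonoid.mem_bot] at this
        exact hs₀ne this
      obtain ⟨g₀, hg₀G, hg₀ne⟩ := hex
      have hgposR : ∀ g, g ∈ G → g ≠ 0 → (0:ℝ) < (h g : ℝ) := by
        intro g hg hne
        exact_mod_cast hhpos g (hgS g hg) hne
      set P : Set (Fin n → ℝ) := (fun g => ((h g : ℝ))⁻¹ • ι g) '' {g | g ∈ G ∧ g ≠ 0} with hP
      have hPfin : P.Finite := (G.finite_toSet.subset fun g hg => hg.1).image _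
      have hPsubΔ : P ⊆ Δ := by
        rintro y ⟨g, ⟨hgG', hgne⟩, rfl⟩
        exact hconemem g (hgS g hgG') hgne
      set Q := convexHull ℝ P with hQ
      have hQconv : Convex ℝ Q := convex_convexHull ℝ P
      have hQclosed : IsClosed Q := (hPfin.isCompact_convexHull ℝ).isClosed
      have hQ1 : ∀ z ∈ Q, f z = 1 := by
        intro z hz
        have hplane : Convex ℝ {y : Fin n → ℝ | f y = 1} :=
          convex_hyperplane ⟨fun a b => map_add f a b, fun c x => map_smul f c x⟩ 1
        refine convexHull_min ?_ hplane hz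
        rintro y ⟨g, ⟨hgG', hgne⟩, rfl⟩
        show f _ = 1
        rw [map_smul, hcast, smul_eq_mul, inv_mul_cancel₀ (ne_of_gt (hgposR g hgG' hgne))]
      have hz₀Q : ((h g₀ : ℝ))⁻¹ • ι g₀ ∈ Q :=
        subset_convexHull ℝ P ⟨g₀, ⟨hg₀G, hg₀ne⟩, rfl⟩
      have hDmem : ∀ s ∈ S, ι s ∈ {y : Fin n → ℝ | ∃ t : ℝ, 0 ≤ t ∧ ∃ z ∈ Q, y = t • z} := by
        intro s hsS
        rw [← hG] at hsS
        induction hsS using AddSubmonoid.closure_induction with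
        | mem g hg =>
          by_cases hgne : g = 0
          · subst hgne
            exact ⟨0, le_rfl, _, hz₀Q, by rw [hιzero, zero_smul]⟩
          · exact ⟨(h g : ℝ), le_of_lt (hgposR g hg hgne), _,
              subset_convexHull ℝ P ⟨g, ⟨hg, hgne⟩, rfl⟩,
              (smul_inv_smul₀ (ne_of_gt (hgposR g hg hgne)) (ι g)).symm⟩
        | zero =>
          exact ⟨0, le_rfl, _, hz₀Q, by rw [hιzero, zero_smul]⟩
        | add x y hx hy ihx ihy =>
          have hadd : ι (x + y) = ι x + ι y := by
            funext i
            simp [hι]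
          rw [hadd]
          exact coneOf_add hQconv ihx ihy
      have hconv_sub : convexHull ℝ (ι '' (S : Set (Fin n → ℤ))) ⊆
          {y : Fin n → ℝ | ∃ t : ℝ, 0 ≤ t ∧ ∃ z ∈ Q, y = t • z} := by
        refine convexHull_min ?_ (coneOf_convex hQconv)
        rintro y ⟨s, hs, rfl⟩
        exact hDmem s hs
      have hpΔ : p ∈ Δ := extremePoints_subset hp
      have hpmem := hpΔ
      rw [hΔ] at hpmem
      obtain ⟨hp1, hp2⟩ := hpmem
      have hcone_sub : {y : Fin n → ℝ | ∃ c : ℝ, 0 ≤ c ∧ ∃ x ∈ convexHull ℝ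
          (ι '' (S : Set (Fin n → ℤ))), y = c • x} ⊆
          {y : Fin n → ℝ | ∃ t : ℝ, 0 ≤ t ∧ ∃ z ∈ Q, y = t • z} := by
        rintro y ⟨c, hc, x, hx, rfl⟩
        exact coneOf_smul hc (hconv_sub hx)
      have hpclos : p ∈ closure {y : Fin n → ℝ | ∃ t : ℝ, 0 ≤ t ∧ ∃ z ∈ Q, y = t • z} :=
        closure_mono hcone_sub hp1
      have hfp : f p = 1 := by rw [hfapply]; exact hp2
      have hpQ : p ∈ Q := mem_of_closure_cone f hQclosed hQ1 hpclos hfp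
      have hQsubΔ : Q ⊆ Δ := by
        obtain ⟨W, hW⟩ := hpoly
        refine convexHull_min hPsubΔ ?_
        rw [hW]
        exact convex_convexHull ℝ _
      have hpextQ : p ∈ Set.extremePoints ℝ Q := by
        rw [mem_extremePoints] at hp ⊢
        exact ⟨hpQ, fun x₁ h₁ x₂ h₂ hseg => hp.2 x₁ (hQsubΔ h₁) x₂ (hQsubΔ h₂) hseg⟩
      have hpP : p ∈ P := extremePoints_convexHull_subset hpextQ
      obtain ⟨g, ⟨hgG', hgne⟩, rfl⟩ := hpP
      refine ⟨(h g : ℝ), hgposR g hgG' hgne, g, hgS g hgG', ?_⟩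
      funext i
      show (h g : ℝ) * (((h g : ℝ))⁻¹ • ι g) i = (g i : ℝ)
      rw [Pi.smul_apply, smul_eq_mul, mul_inv_cancel_left₀ (ne_of_gt (hgposR g hgG' hgne))]
  · -- extreme points lift → finitely generated
    intro hvert
    obtain ⟨W, hW⟩ := hpoly
    have hcomp : IsCompact Δ := hW ▸ W.finite_toSet.isCompact_convexHull ℝ
    have hconvΔ : Convex ℝ Δ := hW ▸ convex_convexHull ℝ _
    have hVsubW : Set.extremePoints ℝ Δ ⊆ (W : Set (Fin n → ℝ)) := by
      rw [hW]
      exact extremePoints_convexHull_subset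
    have hVfin : (Set.extremePoints ℝ Δ).Finite := W.finite_toSet.subset hVsubW
    have hΔV : Δ = convexHull ℝ (Set.extremePoints ℝ Δ) := by
      have hKM := closure_convexHull_extremePoints hcomp hconvΔ
      exact hKM.symm.trans (hVfin.isCompact_convexHull ℝ).isClosed.closure_eq
    set V : Finset (Fin n → ℝ) := hVfin.toFinset with hV
    have hVmem : ∀ v ∈ V, v ∈ Set.extremePoints ℝ Δ := fun v hv => hVfin.mem_toFinset.1 hv
    have hlift : ∀ v : {x // x ∈ V}, ∃ s ∈ S, 0 < h s ∧ ι s = ((h s : ℤ) : ℝ) • (v : Fin n → ℝ) := by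
      rintro ⟨v, hv⟩
      obtain ⟨c, hc, s, hsS, hcs⟩ := hvert v (hVmem v hv)
      have hvΔ : v ∈ Δ := extremePoints_subset (hVmem v hv)
      have hfv : f v = 1 := by
        rw [hfapply]
        have := hvΔ
        rw [hΔ] at this
        exact this.2
      have hcv : ι s = c • v := by
        funext i
        exact (congrFun hcs i).symm
      have hch : (h s : ℝ) = c := by
        rw [← hcast s, hcv, map_smul, hfv, smul_eq_mul, mul_one]
      have hpos' : 0 < h s := by
        have : (0:ℝ) < (h s : ℝ) := hch ▸ hc
        exact_mod_cast this
      exact ⟨s, hsS, hpos', by rw [hcv, hch]⟩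
    choose w hwS hwpos hwv using hlift
    have hwposR : ∀ v : {x // x ∈ V}, (0:ℝ) < (h (w v) : ℝ) := fun v => by
      exact_mod_cast hwpos v
    set B : Fin n → ℤ := fun i => ∑ v : {x // x ∈ V}, |w v i| with hB
    have hB0 : (0 : Fin n → ℤ) ≤ B := by
      rw [Pi.le_def]
      intro i
      exact Finset.sum_nonneg fun v _ => abs_nonneg _
    have hcover : ∀ s ∈ S, ∃ fz ∈ Set.Icc (-B) B, ∃ a : {x // x ∈ V} → ℕ,
        s = fz + ∑ v, a v • w v := by
      intro s hsS
      by_cases hs0 : s = 0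
      · subst hs0
        refine ⟨0, Set.mem_Icc.2 ⟨neg_nonpos.2 hB0, hB0⟩, 0, by simp⟩
      · have hhs : 0 < h s := hhpos s hsS hs0
        have htR : (0:ℝ) < (h s : ℝ) := by exact_mod_cast hhs
        have htne : ((h s : ℤ) : ℝ) ≠ 0 := ne_of_gt htR
        have hq : ((h s : ℝ))⁻¹ • ι s ∈ convexHull ℝ (V : Set (Fin n → ℝ)) := by
          have := hconemem s hsS hs0
          rw [hΔV] at this
          rwa [← hVfin.coe_toFinset] at this
        rw [Finset.mem_convexHull'] at hq
        obtain ⟨μ, hμ0, hμ1, hμq⟩ := hq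
        set θ : {x // x ∈ V} → ℝ := fun v => (h s : ℝ) * μ v / (h (w v) : ℝ) with hθ
        have hθ0 : ∀ v, 0 ≤ θ v := by
          intro v
          exact div_nonneg (mul_nonneg (le_of_lt htR) (hμ0 v v.2)) (le_of_lt (hwposR v))
        have hkey : ι s = ∑ v : {x // x ∈ V}, θ v • ι (w v) := by
          have h1 : ∀ v : {x // x ∈ V}, θ v • ι (w v) = ((h s : ℝ) * μ v) • (v : Fin n → ℝ) := by
            intro v
            rw [hwv v, smul_smul]
            congr 1
            show (h s : ℝ) * μ v / (h (w v) : ℝ) * (h (w v) : ℝ) = (h s : ℝ) * μ v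
            exact div_mul_cancel₀ _ (ne_of_gt (hwposR v))
          rw [Finset.sum_congr rfl fun v _ => h1 v]
          have h2 : ∑ v : {x // x ∈ V}, ((h s : ℝ) * μ ↑v) • (↑v : Fin n → ℝ) =
              (h s : ℝ) • ∑ v : {x // x ∈ V}, μ ↑v • (↑v : Fin n → ℝ) := by
            rw [Finset.smul_sum]
            exact Finset.sum_congr rfl fun v _ => (mul_smul _ _ _)
          rw [h2]
          have h3 : ∑ v : {x // x ∈ V}, μ ↑v • (↑v : Fin n → ℝ) = ∑ y ∈ V, μ y • y :=
            Finset.sum_coe_sort V fun y => μ y • y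
          rw [h3, hμq, smul_inv_smul₀ htne]
        set a : {x // x ∈ V} → ℕ := fun v => ⌊θ v⌋₊ with ha
        have hfrac : ∀ v, 0 ≤ θ v - (a v : ℝ) ∧ θ v - (a v : ℝ) ≤ 1 := by
          intro v
          constructor
          · exact sub_nonneg.2 (Nat.floor_le (hθ0 v))
          · have := Nat.lt_floor_add_one (θ v)
            rw [ha]
            push_cast
            linarith
        have hcoord : ∀ i, |(s - ∑ v, a v • w v) i| ≤ B i := by
          intro i
          have hreal : (((s - ∑ v, a v • w v) i : ℤ) : ℝ) =
              ∑ v : {x // x ∈ V}, (θ v - (a v : ℝ)) * ((w v i : ℤ) : ℝ) := by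
            have hsub : (s - ∑ v : {x // x ∈ V}, a v • w v) i =
                s i - ∑ v : {x // x ∈ V}, (a v : ℤ) * w v i := by
              simp [Finset.sum_apply, nsmul_eq_mul]
            have hki := congrFun hkey i
            simp only [hι, Finset.sum_apply, Pi.smul_apply, smul_eq_mul] at hki
            rw [hsub]
            push_cast
            rw [hki, ← Finset.sum_sub_distrib]
            exact Finset.sum_congr rfl fun v _ => by ring
          have habsR : |(((s - ∑ v, a v • w v) i : ℤ) : ℝ)| ≤ ((B i : ℤ) : ℝ) := by
            rw [hreal]
            refine (Finset.abs_sum_le_sum_abs _ _).trans ?_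
            have hbd : ∀ v : {x // x ∈ V}, |(θ v - (a v : ℝ)) * ((w v i : ℤ) : ℝ)| ≤
                |((w v i : ℤ) : ℝ)| := by
              intro v
              rw [abs_mul]
              have h01 := hfrac v
              have : |θ v - (a v : ℝ)| ≤ 1 := abs_le.2 ⟨by linarith [h01.1], h01.2⟩
              nlinarith [abs_nonneg ((w v i : ℤ) : ℝ)]
            refine (Finset.sum_le_sum fun v _ => hbd v).trans ?_
            rw [hB]
            push_cast
            exact le_refl _
          have : |(s - ∑ v, a v • w v) i| ≤ B i := by exact_mod_cast habsR
          exact this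
        refine ⟨s - ∑ v, a v • w v, ?_, a, by abel⟩
        rw [Set.mem_Icc]
        constructor
        · rw [Pi.le_def]
          intro i
          have := (abs_le.1 (hcoord i)).1
          simpa using this
        · rw [Pi.le_def]
          intro i
          exact (abs_le.1 (hcoord i)).2
    apply fg_of_cover S w hwS (Set.finite_Icc (-B) B).toFinset
    intro s hs
    obtain ⟨fz, hfz, a, hdecomp⟩ := hcover s hs
    exact ⟨fz, (Set.finite_Icc (-B) B).mem_toFinset.2 hfz, a, hdecomp⟩
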